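/- Let (X, ν) be a probability space and let σ_1, …, σ_K : X → X be measurable bijections with measurable inverses, each preserving ν. Assume the joint action is ergodic: every measurable set E with ν(σ_k^{-1}(E) Δ E) = 0 for all k ∈ {1,…,K} satisfies ν(E) = 0 or ν(E) = 1. Define G on L²(X, ν) by (Gf)(x) = (1/K) ∑_{k=1}^K f(σ_k(x)). Then every f ∈ L²(X, ν) with Gf = f ν-almost everywhere is constant ν-almost everywhere; in particular, the eigenspace of G for the eigenvalue 1 is the one-dimensional span of the constant function 1. -/

import Mathlib

open MeasureTheory

private lemma const_of_invariant {X : Type*} [MeasurableSpace X]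
    {ν : Measure X} [IsProbabilityMeasure ν] {K : ℕ} {σ : Fin K → X → X}
    (herg : ∀ E : Set X, MeasurableSet E →
      (∀ k, ν (symmDiff (σ k ⁻¹' E) E) = 0) → ν E = 0 ∨ ν E = 1)
    {g : X → ℝ} (hg : Measurable g)
    (hinv : ∀ k, ∀ᵐ x ∂ν, g (σ k x) = g x) :
    ∃ c : ℝ, ∀ᵐ x ∂ν, g x = c := by
  set A : ℝ → Set X := fun c => {x | c < g x} with hA
  have hAmeas : ∀ c, MeasurableSet (A c) := fun c => measurableSet_lt measurable_const hg
  have hAmono : ∀ {c d : ℝ}, c ≤ d → A d ⊆ A c := fun h x hx => lt_of_le_of_lt h hx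
  have h01 : ∀ c : ℝ, ν (A c) = 0 ∨ ν (A c) = 1 := by
    intro c
    refine herg _ (hAmeas c) fun k => measure_mono_null ?_ (ae_iff.1 (hinv k))
    intro x hx
    rw [Set.mem_symmDiff] at hx
    show ¬ (g (σ k x) = g x)
    rcases hx with ⟨hx1, hx2⟩ | ⟨hx1, hx2⟩ <;>
      · simp only [A, Set.mem_preimage, Set.mem_setOf_eq] at hx1 hx2
        intro h
        exact hx2 (h ▸ hx1)
  have hub : ∃ n : ℕ, ν (A (n : ℝ)) = 0 := by
    by_contra h
    push_neg at h
    have h1 : ∀ n : ℕ, ν (A (n : ℝ))ᶜ = 0 := by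
      intro n
      rw [measure_compl (hAmeas _) (measure_ne_top _ _), (h01 _).resolve_left (h n),
        measure_univ, tsub_self]
    have h2 : ν (⋃ n : ℕ, (A (n : ℝ))ᶜ) = 0 := measure_iUnion_null h1
    have huniv : (⋃ n : ℕ, (A (n : ℝ))ᶜ) = Set.univ := by
      ext x
      simp only [Set.mem_iUnion, Set.mem_compl_iff, Set.mem_univ, iff_true]
      obtain ⟨n, hn⟩ := exists_nat_ge (g x)
      exact ⟨n, by simp [A]; exact hn⟩
    rw [huniv, measure_univ] at h2
    exact one_ne_zero h2
  have hlb : ∃ m : ℕ, ν (A (-(m : ℝ))) = 1 := by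
    by_contra h
    push_neg at h
    have h1 : ∀ m : ℕ, ν (A (-(m : ℝ))) = 0 := fun m => (h01 _).resolve_right (h m)
    have h2 : ν (⋃ m : ℕ, A (-(m : ℝ))) = 0 := measure_iUnion_null h1
    have huniv : (⋃ m : ℕ, A (-(m : ℝ))) = Set.univ := by
      ext x
      simp only [Set.mem_iUnion, Set.mem_univ, iff_true]
      obtain ⟨m, hm⟩ := exists_nat_gt (-(g x))
      exact ⟨m, by simp only [A, Set.mem_setOf_eq]; linarith⟩
    rw [huniv, measure_univ] at h2
    exact one_ne_zero h2
  obtain ⟨n, hn⟩ := hub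
  obtain ⟨m, hm⟩ := hlb
  set S : Set ℝ := {c | ν (A c) = 0} with hS
  have hSne : S.Nonempty := ⟨n, hn⟩
  have hSup : ∀ {c d : ℝ}, c ∈ S → c ≤ d → d ∈ S :=
    fun hc hcd => measure_mono_null (hAmono hcd) hc
  have hSbdd : BddBelow S := by
    refine ⟨-(m : ℝ), fun c hc => ?_⟩
    by_contra hcm
    push_neg at hcm
    have := measure_mono_null (hAmono hcm.le) hc
    rw [hm] at this
    exact one_ne_zero this
  set c₀ := sInf S with hc₀
  have hup : ν (A c₀) = 0 := by
    have hcover : A c₀ ⊆ ⋃ n : ℕ, A (c₀ + 1 / (n + 1)) := by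
      intro x hx
      obtain ⟨j, hj⟩ := exists_nat_one_div_lt (show (0:ℝ) < g x - c₀ from sub_pos.2 hx)
      exact Set.mem_iUnion.2 ⟨j, by simp only [A, Set.mem_setOf_eq]; linarith⟩
    refine measure_mono_null hcover (measure_iUnion_null fun j => ?_)
    have hlt : c₀ < c₀ + 1 / ((j:ℝ) + 1) := by
      have : (0:ℝ) < 1 / ((j:ℝ) + 1) := by positivity
      linarith
    obtain ⟨s, hs, hslt⟩ := exists_lt_of_csInf_lt hSne hlt
    exact hSup hs hslt.le
  have hdown : ν {x | g x < c₀} = 0 := by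
    have hcover : {x | g x < c₀} ⊆ ⋃ n : ℕ, (A (c₀ - 1 / (n + 1)))ᶜ := by
      intro x hx
      obtain ⟨j, hj⟩ := exists_nat_one_div_lt (show (0:ℝ) < c₀ - g x from sub_pos.2 hx)
      refine Set.mem_iUnion.2 ⟨j, ?_⟩
      simp only [A, Set.mem_compl_iff, Set.mem_setOf_eq, not_lt]
      linarith
    refine measure_mono_null hcover (measure_iUnion_null fun j => ?_)
    have hjS : (c₀ - 1 / (j + 1 : ℝ)) ∉ S := fun hmem => by
      have hle := csInf_le hSbdd hmem
      have : (0:ℝ) < 1 / (j + 1 : ℝ) := by positivity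
      rw [← hc₀] at hle
      linarith
    have h1 : ν (A (c₀ - 1 / (j + 1 : ℝ))) = 1 := (h01 _).resolve_left hjS
    rw [measure_compl (hAmeas _) (measure_ne_top _ _), h1, measure_univ, tsub_self]
  refine ⟨c₀, ?_⟩
  have : ν ({x | c₀ < g x} ∪ {x | g x < c₀}) = 0 :=
    measure_union_null hup hdown
  rw [ae_iff]
  refine measure_mono_null ?_ this
  intro x hx
  simp only [Set.mem_setOf_eq] at hx ⊢
  rcases lt_or_gt_of_ne hx with h | h
  · exact Or.inr h
  · exact Or.inl h

private lemma l2_mul_integrable {X : Type*} [MeasurableSpace X] {ν : Measure X}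
    {f g : X → ℝ} (hf : MemLp f 2 ν) (hg : MemLp g 2 ν) :
    Integrable (fun x => f x * g x) ν := by
  have h := (((hf.add hg).integrable_sq.sub hf.integrable_sq).sub hg.integrable_sq).const_mul
    ((1 : ℝ)/2)
  exact h.congr (by filter_upwards with x; simp [Pi.add_apply]; ring)

theorem stmt_3 {X : Type*} [MeasurableSpace X] [Nonempty X]
    (ν : Measure X) [IsProbabilityMeasure ν]
    (K : ℕ) (hK : 0 < K)
    (σ : Fin K → X → X)
    (hmeas : ∀ k, Measurable (σ k))
    (hbij : ∀ k, Function.Bijective (σ k))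
    (hinvmeas : ∀ k, Measurable (Function.invFun (σ k)))
    (hpres : ∀ k, MeasurePreserving (σ k) ν ν)
    (herg : ∀ E : Set X, MeasurableSet E →
      (∀ k, ν (symmDiff (σ k ⁻¹' E) E) = 0) → ν E = 0 ∨ ν E = 1)
    (f : X → ℝ) (hf : MemLp f 2 ν)
    (hfix : ∀ᵐ x ∂ν, (1 / (K : ℝ)) * ∑ k : Fin K, f (σ k x) = f x) :
    ∃ cst : ℝ, ∀ᵐ x ∂ν, f x = cst := by
  have hKne : (K : ℝ) ≠ 0 := Nat.cast_ne_zero.2 hK.ne'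
  -- each composition is in L²
  have hfσ : ∀ k, MemLp (fun x => f (σ k x)) 2 ν :=
    fun k => hf.comp_measurePreserving (hpres k)
  -- σ k is a measurable embedding
  have hemb : ∀ k, MeasurableEmbedding (σ k) := by
    intro k
    exact (MeasurableEquiv.mk
      ⟨σ k, Function.invFun (σ k), Function.leftInverse_invFun (hbij k).1,
        Function.rightInverse_invFun (hbij k).2⟩ (hmeas k) (hinvmeas k)).measurableEmbedding
  set I : ℝ := ∫ x, f x ^ 2 ∂ν with hI
  have hIk : ∀ k, ∫ x, f (σ k x) ^ 2 ∂ν = I :=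
    fun k => (hpres k).integral_comp (hemb k) (fun y => f y ^ 2)
  have hcross : ∀ k, Integrable (fun x => f x * f (σ k x)) ν :=
    fun k => l2_mul_integrable hf (hfσ k)
  have hKf : ∀ᵐ x ∂ν, ∑ k : Fin K, f (σ k x) = (K : ℝ) * f x := by
    filter_upwards [hfix] with x hx
    field_simp at hx
    linarith [hx]
  have hexp : ∀ k, ∫ x, (f x - f (σ k x)) ^ 2 ∂ν
      = 2 * I - 2 * ∫ x, f x * f (σ k x) ∂ν := by
    intro k
    have hfun : (fun x => (f x - f (σ k x)) ^ 2)
        = fun x => (f x ^ 2 + f (σ k x) ^ 2) - 2 * (f x * f (σ k x)) := by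
      funext x; ring
    have hadd : Integrable (fun x => f x ^ 2 + f (σ k x) ^ 2) ν :=
      hf.integrable_sq.add (hfσ k).integrable_sq
    have hmul : Integrable (fun x => 2 * (f x * f (σ k x))) ν := (hcross k).const_mul 2
    rw [hfun, integral_sub hadd hmul, integral_add hf.integrable_sq (hfσ k).integrable_sq,
      integral_const_mul, hIk k, ← hI]
    ring
  have hsumcross : ∑ k : Fin K, ∫ x, f x * f (σ k x) ∂ν = (K : ℝ) * I := by
    rw [← integral_finset_sum _ (fun k _ => hcross k)]
    have h1 : ∫ x, ∑ k : Fin K, f x * f (σ k x) ∂ν = ∫ x, (K : ℝ) * f x ^ 2 ∂ν := by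
      refine integral_congr_ae ?_
      filter_upwards [hKf] with x hx
      rw [← Finset.mul_sum, hx]; ring
    rw [h1, integral_const_mul, ← hI]
  have hsumzero : ∑ k : Fin K, ∫ x, (f x - f (σ k x)) ^ 2 ∂ν = 0 := by
    simp only [hexp, Finset.sum_sub_distrib, Finset.sum_const, Finset.card_univ,
      Fintype.card_fin, ← Finset.mul_sum, hsumcross]
    ring
  have hzero : ∀ k, ∫ x, (f x - f (σ k x)) ^ 2 ∂ν = 0 := by
    intro k
    have hnn : ∀ k : Fin K, k ∈ Finset.univ → 0 ≤ ∫ x, (f x - f (σ k x)) ^ 2 ∂ν :=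
      fun k _ => integral_nonneg fun x => sq_nonneg _
    exact (Finset.sum_eq_zero_iff_of_nonneg hnn).1 hsumzero k (Finset.mem_univ k)
  have hinvf : ∀ k, ∀ᵐ x ∂ν, f (σ k x) = f x := by
    intro k
    have hint : Integrable (fun x => (f x - f (σ k x)) ^ 2) ν := (hf.sub (hfσ k)).integrable_sq
    have h0 : (fun x => (f x - f (σ k x)) ^ 2) =ᵐ[ν] 0 :=
      (integral_eq_zero_iff_of_nonneg (fun x => sq_nonneg _) hint).1 (hzero k)
    filter_upwards [h0] with x hx
    have := pow_eq_zero_iff (n := 2) (by norm_num) |>.1 hx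
    linarith [sub_eq_zero.1 this]
  -- pass to a measurable representative
  set g : X → ℝ := hf.1.aemeasurable.mk f with hg
  have hgmeas : Measurable g := hf.1.aemeasurable.measurable_mk
  have hfg : f =ᵐ[ν] g := hf.1.aemeasurable.ae_eq_mk
  have hinvg : ∀ k, ∀ᵐ x ∂ν, g (σ k x) = g x := by
    intro k
    have h1 : (fun x => f (σ k x)) =ᵐ[ν] fun x => g (σ k x) :=
      (hpres k).quasiMeasurePreserving.ae_eq_comp hfg
    filter_upwards [h1, hinvf k, hfg] with x h1x h2x h3x
    rw [← h1x, h2x, h3x]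
  obtain ⟨c, hc⟩ := const_of_invariant herg hgmeas hinvg
  exact ⟨c, by filter_upwards [hfg, hc] with x h1 h2; rw [h1, h2]⟩
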